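/- For every integer p ≥ 3 and every fixed β_0 with β*(p) < β_0 < log 2, there exists β̲ > 0 such that sup_{x ∈ η_p^{−1}((β,∞))} H_{β_0,p}(x) = 0 for all β > β̲; consequently the Bahadur slope of the maximum pseudolikelihood test equals 2 H_{β_0,p}(m_*(β_0,p)) for all alternatives β > β̲, i.e., it no longer changes with β. -/

import Mathlib

open Real Set Filter

/-- `I(x) = ½[(1+x)log(1+x) + (1−x)log(1−x)]` (with `Real.log 0 = 0`). -/
noncomputable def bahI (x : ℝ) : ℝ :=
  ((1 + x) * Real.log (1 + x) + (1 - x) * Real.log (1 - x)) / 2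

/-- `H_{β,p}(x) = β xᵖ − I(x)`. -/
noncomputable def bahH (β : ℝ) (p : ℕ) (x : ℝ) : ℝ := β * x ^ p - bahI x

/-- `β*(p) = sup {β ≥ 0 : sup_{x∈[−1,1]} H_{β,p}(x) = 0}`. -/
noncomputable def betaStar (p : ℕ) : ℝ :=
  sSup {β : ℝ | 0 ≤ β ∧ sSup (bahH β p '' Set.Icc (-1 : ℝ) 1) = 0}

/-- inverse hyperbolic tangent. -/
noncomputable def arctanh (x : ℝ) : ℝ := Real.log ((1 + x) / (1 - x)) / 2

/-- `η_p(t) = p⁻¹ t^{1−p} arctanh t` for `t ≠ 0`, and `η_p(0) = 0`. -/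
noncomputable def etaFn (p : ℕ) (t : ℝ) : ℝ :=
  if t = 0 then 0 else (p : ℝ)⁻¹ * t ^ (1 - (p : ℤ)) * arctanh t

lemma bahI_zero : bahI 0 = 0 := by simp [bahI]

lemma bahI_neg (x : ℝ) : bahI (-x) = bahI x := by
  unfold bahI
  rw [show (1:ℝ) + -x = 1 - x by ring, show (1:ℝ) - -x = 1 + x by ring]
  ring

lemma bahI_abs (x : ℝ) : bahI |x| = bahI x := by
  rcases abs_cases x with ⟨h, _⟩ | ⟨h, _⟩
  · rw [h]
  · rw [h, bahI_neg]

lemma continuous_bahI : Continuous bahI := by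
  have h1 : Continuous fun x : ℝ => (1 + x) * Real.log (1 + x) :=
    Real.continuous_mul_log.comp (continuous_const.add continuous_id)
  have h2 : Continuous fun x : ℝ => (1 - x) * Real.log (1 - x) :=
    Real.continuous_mul_log.comp (continuous_const.sub continuous_id)
  exact (h1.add h2).div_const 2

lemma arctanh_nonneg {x : ℝ} (h0 : 0 ≤ x) (h1 : x < 1) : 0 ≤ arctanh x := by
  have : (1:ℝ) ≤ (1 + x) / (1 - x) := by
    rw [le_div_iff₀ (by linarith)]; linarith
  unfold arctanh
  have := Real.log_nonneg this
  linarith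

lemma arctanh_neg (x : ℝ) : arctanh (-x) = - arctanh x := by
  unfold arctanh
  rw [show (1:ℝ) + -x = 1 - x by ring, show (1:ℝ) - -x = 1 + x by ring,
    show (1 - x) / (1 + x) = ((1+x)/(1-x))⁻¹ by rw [inv_div], Real.log_inv]
  ring

lemma arctanh_mono {a b : ℝ} (h0 : 0 ≤ a) (hab : a ≤ b) (hb : b < 1) : arctanh a ≤ arctanh b := by
  unfold arctanh
  have h1a : (0:ℝ) < 1 - a := by linarith
  have h1b : (0:ℝ) < 1 - b := by linarith
  have : (1 + a) / (1 - a) ≤ (1 + b) / (1 - b) := by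
    rw [div_le_div_iff₀ h1a h1b]; nlinarith
  have := Real.log_le_log (by positivity) this
  linarith

lemma half_le_arctanh {x : ℝ} (h0 : 0 ≤ x) (h1 : x < 1) : x / 2 ≤ arctanh x := by
  unfold arctanh
  rw [Real.log_div (by linarith) (by linarith)]
  have hl1 : (0:ℝ) ≤ Real.log (1 + x) := Real.log_nonneg (by linarith)
  have hl2 : Real.log (1 - x) ≤ -x := by
    have := Real.log_le_sub_one_of_pos (show (0:ℝ) < 1 - x by linarith)
    linarith
  linarith

lemma abs_arctanh {t : ℝ} (h : |t| < 1) : |arctanh t| = arctanh |t| := by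
  rcases abs_cases t with ⟨he, h0⟩ | ⟨he, h0⟩
  · rw [he, abs_of_nonneg (arctanh_nonneg h0 (he ▸ h))]
  · have hlt : -t < 1 := he ▸ h
    have hnn : 0 ≤ arctanh (-t) := arctanh_nonneg (by linarith) hlt
    rw [arctanh_neg] at hnn
    rw [he, abs_of_nonpos (by linarith), arctanh_neg]

lemma hasDerivAt_bahI {x : ℝ} (hx : x ∈ Set.Ioo (-1:ℝ) 1) : HasDerivAt bahI (arctanh x) x := by
  obtain ⟨hx1, hx2⟩ := hx
  have h1p : (0:ℝ) < 1 + x := by linarith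
  have h1m : (0:ℝ) < 1 - x := by linarith
  have d1 : HasDerivAt (fun y : ℝ => 1 + y) 1 x := (hasDerivAt_id x).const_add 1
  have d2 : HasDerivAt (fun y : ℝ => 1 - y) (-1) x := (hasDerivAt_id x).const_sub 1
  have hl1 : HasDerivAt (fun y : ℝ => Real.log (1 + y)) ((1+x)⁻¹ * 1) x :=
    (Real.hasDerivAt_log h1p.ne').comp x d1
  have hl2 : HasDerivAt (fun y : ℝ => Real.log (1 - y)) ((1-x)⁻¹ * (-1)) x :=
    (Real.hasDerivAt_log h1m.ne').comp x d2
  have hm1 := d1.mul hl1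
  have hm2 := d2.mul hl2
  have hsum : HasDerivAt bahI (((1:ℝ) * Real.log (1 + x) + (1 + x) * ((1+x)⁻¹ * 1) + ((-1) * Real.log (1 - x) + (1 - x) * ((1-x)⁻¹ * (-1)))) / 2) x := (hm1.add hm2).div_const 2
  convert hsum using 1
  unfold arctanh
  rw [Real.log_div h1p.ne' h1m.ne']
  field_simp
  ring

lemma bahI_ge_sq {x : ℝ} (h : |x| ≤ 1/2) : x^2/4 ≤ bahI x := by
  -- reduce to |x|
  rw [← bahI_abs x, ← sq_abs x]
  set y := |x| with hy
  have hy0 : 0 ≤ y := abs_nonneg x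
  have hy1 : y ≤ 1/2 := h
  have hmono : MonotoneOn (fun z : ℝ => bahI z - z^2/4) (Set.Icc 0 (1/2)) := by
    apply monotoneOn_of_deriv_nonneg (convex_Icc _ _)
    · exact (continuous_bahI.sub (by continuity)).continuousOn
    · intro z hz
      rw [interior_Icc] at hz
      have hd : HasDerivAt (fun z : ℝ => bahI z - z^2/4) (arctanh z - z/2) z := by
        have h1 : HasDerivAt bahI (arctanh z) z :=
          hasDerivAt_bahI ⟨by linarith [hz.1], by linarith [hz.2]⟩
        have h2 : HasDerivAt (fun z : ℝ => z^2/4) (2 * z / 4) z := by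
          simpa using ((hasDerivAt_pow 2 z).div_const 4)
        exact (h1.sub h2).congr_deriv (by ring)
      exact hd.differentiableAt.differentiableWithinAt
    · intro z hz
      rw [interior_Icc] at hz
      have hd : HasDerivAt (fun z : ℝ => bahI z - z^2/4) (arctanh z - z/2) z := by
        have h1 : HasDerivAt bahI (arctanh z) z :=
          hasDerivAt_bahI ⟨by linarith [hz.1], by linarith [hz.2]⟩
        have h2 : HasDerivAt (fun z : ℝ => z^2/4) (2 * z / 4) z := by
          simpa using ((hasDerivAt_pow 2 z).div_const 4)
        exact (h1.sub h2).congr_deriv (by ring)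
      rw [hd.deriv]
      have := half_le_arctanh hz.1.le (by linarith [hz.2])
      linarith
  have := hmono (Set.mem_Icc.2 ⟨le_refl 0, by norm_num⟩) (Set.mem_Icc.2 ⟨hy0, hy1⟩) hy0
  simp only [bahI_zero] at this
  nlinarith [this]

lemma zpow_anti_base {a b : ℝ} (ha : 0 < a) (hab : a ≤ b) {p : ℕ} (hp : 1 ≤ p) :
    b ^ (1 - (p:ℤ)) ≤ a ^ (1 - (p:ℤ)) := by
  have hb : 0 < b := lt_of_lt_of_le ha hab
  have key : ∀ c : ℝ, c > 0 → c ^ (1 - (p:ℤ)) = c / c ^ p := by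
    intro c hc
    rw [zpow_sub₀ hc.ne', zpow_one, zpow_natCast, div_eq_mul_inv]
  rw [key a ha, key b hb]
  rw [div_le_div_iff₀ (by positivity) (by positivity)]
  obtain ⟨q, rfl⟩ : ∃ q, p = q + 1 := ⟨p - 1, (Nat.succ_pred_eq_of_pos hp).symm⟩
  have hq : a ^ q ≤ b ^ q := pow_le_pow_left₀ ha.le hab q
  have haq : 0 < a ^ q := pow_pos ha q
  calc b * a ^ (q+1) = (b * a) * a ^ q := by ring
    _ ≤ (b * a) * b ^ q := by
        have hba : 0 < b * a := by positivity
        nlinarith [mul_le_mul_of_nonneg_left hq hba.le]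
    _ = a * b ^ (q+1) := by ring

lemma etaFn_lower {p : ℕ} (hp : 3 ≤ p) {t : ℝ} (ht : 0 < t) (ht2 : t ≤ 1/2) :
    1 / (2 * p * t) ≤ etaFn p t := by
  have hp0 : (0:ℝ) < p := by positivity
  have hat : t / 2 ≤ arctanh t := half_le_arctanh ht.le (by linarith)
  have hz : t ^ (1 - (p:ℤ)) = t / t ^ p := by
    rw [zpow_sub₀ ht.ne', zpow_one, zpow_natCast, div_eq_mul_inv]
  rw [etaFn, if_neg ht.ne', hz]
  have h1 : (p:ℝ)⁻¹ * (t / t ^ p) * (t/2) ≤ (p:ℝ)⁻¹ * (t / t ^ p) * arctanh t := by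
    apply mul_le_mul_of_nonneg_left hat (by positivity)
  refine le_trans ?_ h1
  have htp : t ^ p ≤ t ^ 3 := pow_le_pow_of_le_one ht.le (by linarith) hp
  have ht3 : (0:ℝ) < t ^ 3 := by positivity
  have htp0 : (0:ℝ) < t ^ p := by positivity
  have key : (p:ℝ)⁻¹ * (t / t ^ 3) * (t/2) ≤ (p:ℝ)⁻¹ * (t / t ^ p) * (t/2) := by
    have : t / t ^ 3 ≤ t / t ^ p := div_le_div_of_nonneg_left ht.le htp0 htp
    have hpin : (0:ℝ) ≤ (p:ℝ)⁻¹ * (t/2) := by positivity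
    nlinarith [this]
  refine le_trans ?_ key
  have heq : (p:ℝ)⁻¹ * (t / t ^ 3) * (t/2) = 1 / (2 * p * t) := by
    field_simp
  rw [heq]
lemma abs_zpow_one_sub {t : ℝ} (ht : t ≠ 0) (p : ℕ) :
    |t ^ (1 - (p:ℤ))| = |t| ^ (1 - (p:ℤ)) := by
  rw [zpow_sub₀ ht, zpow_sub₀ (abs_ne_zero.mpr ht), abs_div, zpow_one, zpow_one,
    zpow_natCast, zpow_natCast, abs_pow]


set_option maxHeartbeats 1000000 in
/-- For `p ≥ 3` and fixed `β₀` with `β*(p) < β₀ < log 2`, with `m₀ = m_*(β₀,p)` the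
positive global maximizer of `H_{β₀,p}` on `[−1,1]`: there is `β̲ > 0` such that for all
`β > β̲`, `sup_{x ∈ η_p⁻¹((β,∞))} H_{β₀,p}(x) = 0`; consequently the MPL Bahadur slope
`2[sup_{[−1,1]} H_{β₀,p} − sup_{η_p⁻¹((β,∞))} H_{β₀,p}]` equals `2 H_{β₀,p}(m₀)` for all
such `β`, i.e. it no longer changes with `β`. -/
theorem statement13 (p : ℕ) (hp : 3 ≤ p) (β₀ : ℝ) (h0 : betaStar p < β₀)
    (h1 : β₀ < Real.log 2)
    (m₀ : ℝ) (hm0 : 0 < m₀) (hm1 : m₀ ∈ Set.Icc (-1 : ℝ) 1)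
    (hmax : IsMaxOn (bahH β₀ p) (Set.Icc (-1 : ℝ) 1) m₀) :
    ∃ B, 0 < B ∧ ∀ β, B < β →
      sSup (bahH β₀ p '' {t ∈ Set.Icc (-1 : ℝ) 1 | β < etaFn p t}) = 0 ∧
      2 * (sSup (bahH β₀ p '' Set.Icc (-1 : ℝ) 1)
          - sSup (bahH β₀ p '' {t ∈ Set.Icc (-1 : ℝ) 1 | β < etaFn p t}))
        = 2 * bahH β₀ p m₀ := by
  have hβ₀ : 0 < β₀ :=
    lt_of_le_of_lt (Real.sSup_nonneg fun x hx => hx.1) h0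
  have hppos : (0:ℝ) < p := by positivity
  set δ₀ : ℝ := min (1/2) (1/(4*β₀)) with hδ₀def
  have hδ₀pos : 0 < δ₀ := lt_min (by norm_num) (by positivity)
  have hδ₀half : δ₀ ≤ 1/2 := min_le_left _ _
  have hδ₀β : β₀ * δ₀ ≤ 1/4 := by
    have h := min_le_right (1/2 : ℝ) (1/(4*β₀))
    calc β₀ * δ₀ ≤ β₀ * (1/(4*β₀)) := by
          exact mul_le_mul_of_nonneg_left h hβ₀.le
      _ = 1/4 := by field_simp
  -- near zero
  have hnear0 : ∀ t : ℝ, |t| ≤ δ₀ → bahH β₀ p t ≤ 0 := by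
    intro t ht
    have habs : |t| ≤ 1/2 := le_trans ht hδ₀half
    have hI := bahI_ge_sq habs
    have h1 : t ^ p ≤ |t| ^ p := by
      calc t ^ p ≤ |t ^ p| := le_abs_self _
        _ = |t| ^ p := abs_pow t p
    have h2 : |t| ^ p ≤ |t| ^ 3 := pow_le_pow_of_le_one (abs_nonneg t) (by linarith) hp
    have h3 : β₀ * |t| ^ 3 ≤ t^2/4 := by
      have h5 : |t|^2 = t^2 := sq_abs t
      nlinarith [abs_nonneg t, sq_nonneg t, mul_le_mul_of_nonneg_left ht hβ₀.le]
    have h4 : β₀ * t ^ p ≤ β₀ * |t| ^ 3 := by nlinarith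
    unfold bahH
    nlinarith
  -- near one
  have hI1 : bahI 1 = Real.log 2 := by
    unfold bahI; norm_num
  have hcont1 : ContinuousAt bahI 1 := continuous_bahI.continuousAt
  obtain ⟨δ₁, hδ₁pos, hδ₁⟩ :=
    Metric.continuousAt_iff.mp hcont1 (Real.log 2 - β₀) (by linarith)
  set δ₂ : ℝ := min δ₁ (1/2) with hδ₂def
  have hδ₂pos : 0 < δ₂ := lt_min hδ₁pos (by norm_num)
  have hδ₂half : δ₂ ≤ 1/2 := min_le_right _ _
  have hnear1 : ∀ t : ℝ, t ∈ Set.Icc (-1:ℝ) 1 → 1 - δ₂ < |t| → bahH β₀ p t ≤ 0 := by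
    intro t htI habs
    have hab1 : |t| ≤ 1 := abs_le.mpr ⟨htI.1, htI.2⟩
    have hdist : dist |t| 1 < δ₁ := by
      rw [Real.dist_eq, abs_of_nonpos (by linarith)]
      have := min_le_left δ₁ (1/2 : ℝ)
      linarith
    have hd := hδ₁ hdist
    rw [hI1, Real.dist_eq] at hd
    have hIt : β₀ < bahI |t| := by
      have := abs_lt.mp hd
      linarith [this.1]
    rw [bahI_abs] at hIt
    have htp : t ^ p ≤ 1 := by
      calc t ^ p ≤ |t| ^ p := by
            calc t ^ p ≤ |t ^ p| := le_abs_self _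
              _ = |t| ^ p := abs_pow t p
        _ ≤ 1 := pow_le_one₀ (abs_nonneg t) hab1
    have : β₀ * t ^ p ≤ β₀ := by nlinarith
    unfold bahH; linarith
  -- the bound A on the middle region
  set A : ℝ := (p:ℝ)⁻¹ * δ₀ ^ (1 - (p:ℤ)) * arctanh (1 - δ₂) with hAdef
  have hat2 : 0 ≤ arctanh (1 - δ₂) := arctanh_nonneg (by linarith) (by linarith)
  have hzp : (0:ℝ) < δ₀ ^ (1 - (p:ℤ)) := zpow_pos hδ₀pos _
  have hA0 : 0 ≤ A := by
    apply mul_nonneg (mul_nonneg (by positivity) hzp.le) hat2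
  refine ⟨A + 1, by linarith, ?_⟩
  intro β hβ
  have hβpos : (1:ℝ) ≤ β := by linarith
  have hmid : ∀ t : ℝ, δ₀ ≤ |t| → |t| ≤ 1 - δ₂ → etaFn p t ≤ A := by
    intro t hta htb
    have ht0 : t ≠ 0 := by
      intro h; rw [h, abs_zero] at hta; linarith
    have habs1 : |t| < 1 := by linarith
    rw [etaFn, if_neg ht0]
    calc (p:ℝ)⁻¹ * t ^ (1 - (p:ℤ)) * arctanh t
        ≤ |(p:ℝ)⁻¹ * t ^ (1 - (p:ℤ)) * arctanh t| := le_abs_self _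
      _ = (p:ℝ)⁻¹ * |t| ^ (1 - (p:ℤ)) * |arctanh t| := by
          rw [abs_mul, abs_mul, abs_zpow_one_sub ht0, abs_inv, Nat.abs_cast]
      _ = (p:ℝ)⁻¹ * |t| ^ (1 - (p:ℤ)) * arctanh |t| := by rw [abs_arctanh habs1]
      _ ≤ A := by
          rw [hAdef]
          have hz : |t| ^ (1 - (p:ℤ)) ≤ δ₀ ^ (1 - (p:ℤ)) :=
            zpow_anti_base hδ₀pos hta (by omega)
          have hm : arctanh |t| ≤ arctanh (1 - δ₂) :=
            arctanh_mono (abs_nonneg t) htb (by linarith)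
          have hz2 : (0:ℝ) ≤ |t| ^ (1 - (p:ℤ)) := (zpow_pos (abs_pos.mpr ht0) _).le
          have hat3 : 0 ≤ arctanh |t| := arctanh_nonneg (abs_nonneg t) habs1
          apply mul_le_mul _ hm hat3 (mul_nonneg (by positivity) hzp.le)
          exact mul_le_mul_of_nonneg_left hz (by positivity)
  have hSsub : ∀ t : ℝ, t ∈ Set.Icc (-1:ℝ) 1 → β < etaFn p t → bahH β₀ p t ≤ 0 := by
    intro t ht hη
    by_cases hc : |t| < δ₀
    · exact hnear0 t hc.le
    · push_neg at hc
      by_cases hc2 : 1 - δ₂ < |t|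
      · exact hnear1 t ht hc2
      · push_neg at hc2
        have := hmid t hc hc2
        linarith
  -- approximation near zero
  have happrox : ∀ ε : ℝ, 0 < ε →
      ∃ t ∈ Set.Icc (-1:ℝ) 1, β < etaFn p t ∧ -ε < bahH β₀ p t := by
    intro ε hε
    have hcont0 : ContinuousAt (bahH β₀ p) 0 :=
      ((continuous_const.mul (continuous_pow p)).sub continuous_bahI).continuousAt
    have hH0 : bahH β₀ p 0 = 0 := by
      unfold bahH
      rw [bahI_zero, zero_pow (by omega : p ≠ 0)]; ring
    obtain ⟨r, hrpos, hr⟩ := Metric.continuousAt_iff.mp hcont0 ε hε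
    have hpβ : (0:ℝ) < p * β := by nlinarith
    set t : ℝ := min r (1/(p*β)) / 4 with htdef
    have htpos : 0 < t := div_pos (lt_min hrpos (by positivity)) (by norm_num)
    have htr : t < r := by
      have := min_le_left r (1/(p*β))
      have : t ≤ r / 4 := by
        rw [htdef]; exact div_le_div_of_nonneg_right this (by norm_num)
      linarith
    have ht2 : t ≤ 1/(p*β)/4 := by
      have := min_le_right r (1/(p*β))
      rw [htdef]; exact div_le_div_of_nonneg_right this (by norm_num)
    have hpb3 : (3:ℝ) ≤ p * β := by
      have h3p : (3:ℝ) ≤ (p:ℝ) := by exact_mod_cast hp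
      calc (3:ℝ) = 3 * 1 := by ring
        _ ≤ p * β := mul_le_mul h3p hβpos (by norm_num) (by linarith)
    have ht12 : t ≤ 1/12 := by
      have : 1/(p*β) ≤ 1/3 := by
        rw [div_le_div_iff₀ hpβ (by norm_num)]; linarith
      linarith
    have hhalf : t ≤ 1/2 := by linarith
    have hηt : β < etaFn p t := by
      have hlow := etaFn_lower hp htpos hhalf
      have hkey : p * β * t ≤ 1/4 := by
        calc p * β * t ≤ p * β * (1/(p*β)/4) := by
              exact mul_le_mul_of_nonneg_left ht2 hpβ.le
          _ = 1/4 := by field_simp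
      have : β < 1/(2*p*t) := by
        rw [lt_div_iff₀ (by positivity)]
        have : β * (2 * p * t) = 2 * (p * β * t) := by ring
        rw [this]
        linarith
      linarith
    have hcl : dist (bahH β₀ p t) (bahH β₀ p 0) < ε := by
      apply hr
      rw [Real.dist_eq, sub_zero, abs_of_pos htpos]
      exact htr
    rw [hH0, Real.dist_eq, sub_zero] at hcl
    have := abs_lt.mp hcl
    exact ⟨t, ⟨by linarith, by linarith⟩, hηt, this.1⟩
  -- sup over the restricted set is 0
  have hub : ∀ y ∈ bahH β₀ p '' {t ∈ Set.Icc (-1:ℝ) 1 | β < etaFn p t}, y ≤ 0 := by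
    rintro y ⟨t, ⟨ht1, ht2⟩, rfl⟩
    exact hSsub t ht1 ht2
  have hbdd : BddAbove (bahH β₀ p '' {t ∈ Set.Icc (-1:ℝ) 1 | β < etaFn p t}) :=
    ⟨0, fun y hy => hub y hy⟩
  obtain ⟨t₁, ht₁, hη₁, _⟩ := happrox 1 one_pos
  have hne : (bahH β₀ p '' {t ∈ Set.Icc (-1:ℝ) 1 | β < etaFn p t}).Nonempty :=
    ⟨_, ⟨t₁, ⟨ht₁, hη₁⟩, rfl⟩⟩
  have hsup_le : sSup (bahH β₀ p '' {t ∈ Set.Icc (-1:ℝ) 1 | β < etaFn p t}) ≤ 0 :=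
    csSup_le hne hub
  have hsup_ge : 0 ≤ sSup (bahH β₀ p '' {t ∈ Set.Icc (-1:ℝ) 1 | β < etaFn p t}) := by
    by_contra hlt
    push_neg at hlt
    obtain ⟨t₂, ht₂, hη₂, hH₂⟩ :=
      happrox (-(sSup (bahH β₀ p '' {t ∈ Set.Icc (-1:ℝ) 1 | β < etaFn p t}))) (by linarith)
    have := le_csSup hbdd (Set.mem_image_of_mem _ (Set.mem_sep ht₂ hη₂))
    linarith
  have hS0 : sSup (bahH β₀ p '' {t ∈ Set.Icc (-1:ℝ) 1 | β < etaFn p t}) = 0 :=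
    le_antisymm hsup_le hsup_ge
  refine ⟨hS0, ?_⟩
  have hmax' : ∀ x ∈ Set.Icc (-1:ℝ) 1, bahH β₀ p x ≤ bahH β₀ p m₀ := fun x hx => hmax hx
  have hfull : sSup (bahH β₀ p '' Set.Icc (-1:ℝ) 1) = bahH β₀ p m₀ := by
    apply le_antisymm
    · apply csSup_le ⟨_, Set.mem_image_of_mem _ hm1⟩
      rintro y ⟨x, hx, rfl⟩
      exact hmax' x hx
    · refine le_csSup ⟨bahH β₀ p m₀, ?_⟩ (Set.mem_image_of_mem _ hm1)
      rintro y ⟨x, hx, rfl⟩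
      exact hmax' x hx
  rw [hfull, hS0]
  ring
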